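/- Let k ≥ 1. Every homogeneous element of degree k − 1 of Λ_k is congruent modulo the Arnold ideal I to a ℤ-linear combination of monomials u_{e₁}u_{e₂}⋯u_{e_{k−1}} for which the simple graph on vertex set {1,…,k} with edge set {e₁,…,e_{k−1}} is connected and acyclic (a spanning tree of the complete graph on {1,…,k}); equivalently, the image of the degree-(k−1) homogeneous component of Λ_k in the quotient Λ_k/I is spanned over ℤ by the images of such tree monomials. -/

import Mathlib

/-!
STATEMENT 17: In the exterior algebra Λ_k over ℤ on degree-one generators u_{ij}
(indexed by 2-element subsets of {1,…,k}), every homogeneous element of degree k−1 is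
congruent, modulo the Arnold ideal I, to a ℤ-linear combination of monomials
u_{e₁}⋯u_{e_{k−1}} whose edge set is a spanning tree of the complete graph on {1,…,k}.
-/

noncomputable section

open scoped Sym2

/-- The index type of generators: 2-element subsets {i,j} of {1,…,k}, encoded as
non-diagonal elements of `Sym2 (Fin k)`. -/
def EdgeIdx (k : ℕ) : Type := {p : Sym2 (Fin k) // ¬ p.IsDiag}

/-- The free ℤ-module on the generators. -/
abbrev GenModule (k : ℕ) := EdgeIdx k →₀ ℤ

/-- Λ_k: the exterior algebra over ℤ on one degree-one generator for each 2-element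
subset of {1,…,k}. -/
abbrev Lambda (k : ℕ) := ExteriorAlgebra ℤ (GenModule k)

/-- The generator corresponding to an edge. -/
def gen {k : ℕ} (e : EdgeIdx k) : Lambda k :=
  ExteriorAlgebra.ι ℤ (Finsupp.single e 1)

/-- The generator `u_{ij}` for distinct `i`, `j`. -/
def u {k : ℕ} (i j : Fin k) (h : i ≠ j) : Lambda k :=
  gen ⟨s(i, j), by simpa using h⟩

/-- The set of Arnold elements `u_{ij}u_{jl} + u_{jl}u_{li} + u_{li}u_{ij}`
for pairwise distinct `i`, `j`, `l`. -/
def arnoldSet (k : ℕ) : Set (Lambda k) :=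
  {x | ∃ (i j l : Fin k) (hij : i ≠ j) (hjl : j ≠ l) (hli : l ≠ i),
    x = u i j hij * u j l hjl + u j l hjl * u l i hli + u l i hli * u i j hij}

/-- The Arnold ideal: the two-sided ideal generated by the Arnold elements, realized as
the ℤ-span of all products `a * g * b` with `g` an Arnold element. -/
def arnoldIdeal (k : ℕ) : Submodule ℤ (Lambda k) :=
  Submodule.span ℤ {x | ∃ (a : Lambda k) (g : Lambda k) (b : Lambda k),
    g ∈ arnoldSet k ∧ x = a * g * b}

/-- The homogeneous degree-`n` component of Λ_k: the `n`-th power of the image of the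
generating module. -/
def degComponent (k n : ℕ) : Submodule ℤ (Lambda k) :=
  (LinearMap.range (ExteriorAlgebra.ι ℤ : GenModule k →ₗ[ℤ] Lambda k)) ^ n

/-- The set of tree monomials: products `u_{e₁}⋯u_{e_{k−1}}` over a list of `k−1` edges
such that the simple graph on `{1,…,k}` with these edges is connected and acyclic. -/
def treeMonomials (k : ℕ) : Set (Lambda k) :=
  {x | ∃ l : List (EdgeIdx k), l.length = k - 1 ∧
    (SimpleGraph.fromEdgeSet {p : Sym2 (Fin k) | ∃ e ∈ l, e.1 = p}).Connected ∧
    (SimpleGraph.fromEdgeSet {p : Sym2 (Fin k) | ∃ e ∈ l, e.1 = p}).IsAcyclic ∧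
    x = (l.map gen).prod}

open Pointwise
namespace Stmt17
variable {k : ℕ}

def vec2 (p : Sym2 (Fin k)) : GenModule k :=
  if h : p.IsDiag then 0 else Finsupp.single ⟨p, h⟩ 1

def gen2 (p : Sym2 (Fin k)) : Lambda k := ExteriorAlgebra.ι ℤ (vec2 p)

lemma gen2_coe (e : EdgeIdx k) : gen2 e.1 = gen e := by
  simp [gen2, vec2, e.2, gen]; rfl

lemma gen2_mul_self (p : Sym2 (Fin k)) : gen2 p * gen2 p = 0 :=
  ExteriorAlgebra.ι_sq_zero _

lemma gen2_anticomm (p q : Sym2 (Fin k)) : gen2 p * gen2 q = - (gen2 q * gen2 p) := by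
  have := ExteriorAlgebra.ι_add_mul_swap (R := ℤ) (vec2 p) (vec2 q)
  rw [eq_neg_iff_add_eq_zero]
  exact this

lemma prod_perm {L L' : List (Sym2 (Fin k))} (h : L.Perm L') :
    ∃ ε : ℤˣ, (L.map gen2).prod = (ε : ℤ) • (L'.map gen2).prod := by
  induction h with
  | nil => exact ⟨1, by simp⟩
  | cons x _ ih =>
      obtain ⟨ε, he⟩ := ih
      exact ⟨ε, by rw [List.map_cons, List.prod_cons, List.map_cons, List.prod_cons, he, mul_smul_comm]⟩
  | swap x y L =>
      refine ⟨-1, ?_⟩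
      simp only [List.map_cons, List.prod_cons, Units.val_neg, Units.val_one, neg_smul, one_smul,
        ← mul_assoc]
      rw [gen2_anticomm y x, neg_mul]
  | trans h1 h2 ih1 ih2 =>
      obtain ⟨ε1, he1⟩ := ih1
      obtain ⟨ε2, he2⟩ := ih2
      exact ⟨ε1 * ε2, by rw [he1, he2, smul_smul]; norm_cast⟩

lemma extract {s L : List (Sym2 (Fin k))} (h : List.Subperm s L) :
    ∃ (ε : ℤˣ) (t : List (Sym2 (Fin k))),
      (L.map gen2).prod = (ε : ℤ) • ((s.map gen2).prod * (t.map gen2).prod) := by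
  have hm : (↑s : Multiset (Sym2 (Fin k))) ≤ ↑L := Multiset.coe_le.mpr h
  set t := ((L : Multiset (Sym2 (Fin k))) - ↑s).toList with ht
  have hadd : (↑s : Multiset (Sym2 (Fin k))) + ↑t = ↑L := by
    rw [ht, Multiset.coe_toList, add_tsub_cancel_of_le hm]
  have hperm : L.Perm (s ++ t) := by
    rw [← Multiset.coe_eq_coe, ← Multiset.coe_add, hadd]
  obtain ⟨ε, he⟩ := prod_perm hperm
  exact ⟨ε, t, by rw [he, List.map_append, List.prod_append]⟩

lemma prod_eq_zero_of_not_nodup {L : List (Sym2 (Fin k))} (h : ¬ L.Nodup) :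
    (L.map gen2).prod = 0 := by
  rw [List.nodup_iff_sublist] at h
  push_neg at h
  obtain ⟨a, ha⟩ := h
  obtain ⟨ε, t, he⟩ := extract (ha.subperm)
  rw [he]
  simp [← mul_assoc, gen2_mul_self]


lemma ideal_mul_left (c : Lambda k) {x : Lambda k} (hx : x ∈ arnoldIdeal k) :
    c * x ∈ arnoldIdeal k := by
  induction hx using Submodule.span_induction with
  | mem y hy =>
      obtain ⟨a, g, b, hg, rfl⟩ := hy
      exact Submodule.subset_span ⟨c * a, g, b, hg, by noncomm_ring⟩
  | zero => simpa using (arnoldIdeal k).zero_mem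
  | add y z _ _ hy hz => simpa [mul_add] using (arnoldIdeal k).add_mem hy hz
  | smul r y _ hy => exact (mul_smul_comm r c y) ▸ Submodule.smul_mem _ r hy

lemma ideal_mul_right {x : Lambda k} (c : Lambda k) (hx : x ∈ arnoldIdeal k) :
    x * c ∈ arnoldIdeal k := by
  induction hx using Submodule.span_induction with
  | mem y hy =>
      obtain ⟨a, g, b, hg, rfl⟩ := hy
      exact Submodule.subset_span ⟨a, g, b * c, hg, by noncomm_ring⟩
  | zero => simpa using (arnoldIdeal k).zero_mem
  | add y z _ _ hy hz => simpa [add_mul] using (arnoldIdeal k).add_mem hy hz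
  | smul r y _ hy => exact (smul_mul_assoc r y c) ▸ Submodule.smul_mem _ r hy

lemma gen2_eq_u {i j : Fin k} (h : i ≠ j) : gen2 s(i, j) = u i j h := by
  have hd : ¬ (s(i, j) : Sym2 (Fin k)).IsDiag := by simpa using h
  simp [gen2, vec2, hd, u, gen]

lemma triangle_mem {i j l : Fin k} (hij : i ≠ j) (hjl : j ≠ l) (hli : l ≠ i)
    (w z : Lambda k) :
    w * (gen2 s(i, j) * (gen2 s(j, l) * (gen2 s(l, i) * z))) ∈ arnoldIdeal k := by
  set A := u i j hij
  set B := u j l hjl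
  set C := u l i hli
  have hA : gen2 s(i, j) = A := gen2_eq_u hij
  have hB : gen2 s(j, l) = B := gen2_eq_u hjl
  have hC : gen2 s(l, i) = C := gen2_eq_u hli
  have hBC : B * C + C * B = 0 := ExteriorAlgebra.ι_add_mul_swap _ _
  have hCA : C * A + A * C = 0 := ExteriorAlgebra.ι_add_mul_swap _ _
  have hCC : C * C = 0 := ExteriorAlgebra.ι_sq_zero _
  have key : A * (B * (C * z)) = (A * B + B * C + C * A) * (C * z) := by
    have h1 : B * (C * C) = 0 := by rw [hCC, mul_zero]
    have h2 : C * (A * C) = 0 := by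
      have h3 : A * C = - (C * A) := eq_neg_of_add_eq_zero_right hCA
      rw [h3, mul_neg, ← mul_assoc, hCC, zero_mul, neg_zero]
    calc A * (B * (C * z)) = (A * (B * C) + B * (C * C) + C * (A * C)) * z := by
          rw [h1, h2, add_zero, add_zero]; noncomm_ring
      _ = (A * B + B * C + C * A) * (C * z) := by noncomm_ring
  rw [hA, hB, hC, key, ← mul_assoc]
  exact Submodule.subset_span ⟨w, _, C * z, ⟨i, j, l, hij, hjl, hli, rfl⟩, rfl⟩

/-- consecutive edges of a list of vertices -/
def pe {α : Type*} : List α → List (Sym2 α)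
  | a :: b :: t => s(a, b) :: pe (b :: t)
  | _ => []

/-- edges of the closed cycle through the given vertices -/
def cyc {α : Type*} : List α → List (Sym2 α)
  | [] => []
  | v :: t => pe ((v :: t) ++ [v])

lemma cyc_mem : ∀ n : ℕ, 3 ≤ n → ∀ c : List (Fin k), c.Nodup → c.length = n →
    ∀ w z : Lambda k, w * ((cyc c).map gen2).prod * z ∈ arnoldIdeal k := by
  intro n hn
  induction n, hn using Nat.le_induction with
  | base =>
      intro c hnd hlen w z
      obtain ⟨a, b, d, rfl⟩ := List.length_eq_three.mp hlen
      have hab : a ≠ b := by simp at hnd; tauto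
      have hbd : b ≠ d := by simp at hnd; tauto
      have hda : d ≠ a := by simp at hnd; tauto
      have : cyc [a, b, d] = [s(a, b), s(b, d), s(d, a)] := by
        simp [cyc, pe]
      rw [this]
      have := triangle_mem hab hbd hda w z
      simpa [mul_assoc] using this
  | succ n hn3 ih =>
      intro c hnd hlen w z
      rcases c with _ | ⟨v0, _ | ⟨v1, _ | ⟨v2, cs⟩⟩⟩
      · simp at hlen
      · simp at hlen; omega
      · simp at hlen; omega
      · have hcs : cs ≠ [] := by
          intro h; subst h; simp at hlen; omega
        have h01 : v0 ≠ v1 := by simp at hnd; tauto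
        have h12 : v1 ≠ v2 := by simp at hnd; tauto
        have h20 : v2 ≠ v0 := by
          have : v0 ≠ v2 := by simp at hnd; tauto
          exact this.symm
        have hcyc : cyc (v0 :: v1 :: v2 :: cs)
            = s(v0, v1) :: s(v1, v2) :: pe (v2 :: (cs ++ [v0])) := by
          simp [cyc, pe]
        have hshort : cyc (v0 :: v2 :: cs) = s(v0, v2) :: pe (v2 :: (cs ++ [v0])) := by
          simp [cyc, pe]
        set R := ((pe (v2 :: (cs ++ [v0]))).map gen2).prod with hR
        set A := gen2 s(v0, v1)
        set B := gen2 s(v1, v2)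
        set C := gen2 s(v0, v2)
        have hCswap : gen2 s(v2, v0) = C := by rw [Sym2.eq_swap]
        -- the arnold element
        set g := u v0 v1 h01 * u v1 v2 h12 + u v1 v2 h12 * u v2 v0 h20 + u v2 v0 h20 * u v0 v1 h01 with hgdef
        have hg : g = A * B + B * C + C * A := by
          rw [hgdef, ← gen2_eq_u h01, ← gen2_eq_u h12, ← gen2_eq_u h20, hCswap]
        have hprod : ((cyc (v0 :: v1 :: v2 :: cs)).map gen2).prod = A * (B * R) := by
          rw [hcyc]; simp [hR]; rfl
        have hshortprod : ((cyc (v0 :: v2 :: cs)).map gen2).prod = C * R := by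
          rw [hshort]; simp [hR]; rfl
        have hCA2 : C * A = - (A * C) := gen2_anticomm _ _
        have expand : A * (B * R) = g * R - B * (C * R) - (C * A) * R := by
          rw [hg]; noncomm_ring
        have hkey : w * (A * (B * R)) * z
            = w * g * (R * z) - (w * B) * (C * R) * z + (w * A) * (C * R) * z := by
          rw [expand, hCA2]; noncomm_ring
        rw [hprod, hkey]
        have hnshort : (v0 :: v2 :: cs).Nodup := by
          have hsub : (v0 :: v2 :: cs).Sublist (v0 :: v1 :: v2 :: cs) :=
            List.Sublist.cons₂ _ (List.Sublist.cons _ (List.Sublist.refl _))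
          exact hnd.sublist hsub
        have hlshort : (v0 :: v2 :: cs).length = n := by simp at hlen ⊢; omega
        have ih1 := ih (v0 :: v2 :: cs) hnshort hlshort (w * B) z
        have ih2 := ih (v0 :: v2 :: cs) hnshort hlshort (w * A) z
        rw [hshortprod] at ih1 ih2
        have hg1 : w * g * (R * z) ∈ arnoldIdeal k :=
          Submodule.subset_span ⟨w, g, R * z, ⟨v0, v1, v2, h01, h12, h20, rfl⟩, rfl⟩
        exact Submodule.add_mem _ (Submodule.sub_mem _ hg1 ih1) ih2


section Graph
open SimpleGraph

variable {V : Type*} [Fintype V]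

lemma add_edge_acyclic {G : SimpleGraph V} (hG : G.IsAcyclic) {v w : V}
    (hvw : v ≠ w) (hr : ¬ G.Reachable v w) :
    (G ⊔ fromEdgeSet {s(v, w)}).IsAcyclic := by
  intro u c hc
  by_cases he : s(v, w) ∈ c.edges
  · have hb : (G ⊔ fromEdgeSet {s(v, w)}).IsBridge s(v, w) := by
      rw [isBridge_iff]
      intro hre
      apply hr
      refine hre.mono ?_
      intro x y hxy
      rw [deleteEdges_adj, sup_adj, fromEdgeSet_adj] at hxy
      rcases hxy with ⟨hl | hl, hnr⟩
      · exact hl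
      · exact absurd hl.1 hnr
    exact (isBridge_iff_forall_cycle_notMem (by simp [hvw])).mp hb c hc he
  · have hsub : ∀ e ∈ c.edges, e ∈ G.edgeSet := by
      intro e hee
      have h2 := c.edges_subset_edgeSet hee
      rw [edgeSet_sup, edgeSet_fromEdgeSet] at h2
      rcases h2 with h2 | h2
      · exact h2
      · exfalso
        have : e = s(v, w) := h2.1
        exact he (this ▸ hee)
    exact hG (c.transfer G hsub) (hc.transfer hsub)

lemma exists_isTree_le [Nonempty V] {G : SimpleGraph V} (hG : G.IsAcyclic) :
    ∃ T, G ≤ T ∧ T.IsTree := by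
  classical
  have : Finite (SimpleGraph V) := by
    apply Finite.of_injective (fun (H : SimpleGraph V) => H.Adj)
    intro a b hab
    ext x y
    rw [show a.Adj = b.Adj from hab]
  obtain ⟨T, hGT, hT⟩ := Finite.exists_le_maximal hG
  refine ⟨T, hGT, ?_, hT.1⟩
  by_contra hconn
  have hpre : ¬ T.Preconnected := fun h => hconn ((connected_iff T).mpr ⟨h, inferInstance⟩)
  rw [Preconnected] at hpre
  push_neg at hpre
  obtain ⟨v, w, hvw⟩ := hpre
  have hne : v ≠ w := by rintro rfl; exact hvw (Reachable.refl _)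
  have hadj : ¬ T.Adj v w := fun h => hvw h.reachable
  have hT' := add_edge_acyclic hT.1 hne hvw
  have hle : T ≤ T ⊔ fromEdgeSet {s(v, w)} := le_sup_left
  have hle2 : T ⊔ fromEdgeSet {s(v, w)} ≤ T := hT.2 hT' hle
  have hadj2 : (T ⊔ fromEdgeSet {s(v, w)}).Adj v w := by simp [hne]
  exact hadj (hle2 hadj2)

lemma connected_of_acyclic_card {n : ℕ} (hn : 1 ≤ n) {G : SimpleGraph (Fin n)}
    [Fintype G.edgeSet] (hG : G.IsAcyclic) (hcard : G.edgeFinset.card = n - 1) :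
    G.Connected := by
  classical
  have : Nonempty (Fin n) := ⟨⟨0, hn⟩⟩
  obtain ⟨T, hGT, hT⟩ := exists_isTree_le hG
  haveI : Fintype T.edgeSet := Set.Finite.fintype (Set.toFinite _)
  have hTcard : T.edgeFinset.card + 1 = n := by
    simpa [Fintype.card_fin] using hT.card_edgeFinset
  have hsub : G.edgeFinset ⊆ T.edgeFinset := SimpleGraph.edgeFinset_mono hGT
  have hcardle : T.edgeFinset.card ≤ G.edgeFinset.card := by omega
  have heq : G.edgeFinset = T.edgeFinset := Finset.eq_of_subset_of_card_le hsub hcardle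
  have : G = T := by
    rw [← SimpleGraph.edgeSet_inj]
    have := congrArg (fun (s : Finset (Sym2 (Fin n))) => (s : Set (Sym2 (Fin n)))) heq
    simpa [Set.coe_toFinset] using this
  rw [this]
  exact hT.isConnected

lemma pe_support {G : SimpleGraph V} {a b : V} (p : G.Walk a b) :
    pe p.support = p.edges := by
  induction p with
  | nil => rfl
  | cons h q ih =>
      rw [SimpleGraph.Walk.support_cons, SimpleGraph.Walk.edges_cons, ← ih,
        q.support_eq_cons]
      rfl

lemma cyc_dropLast_support {G : SimpleGraph V} {a : V} (p : G.Walk a a) (hp : ¬ p.Nil) :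
    cyc p.support.dropLast = p.edges := by
  have hne : p.support ≠ [] := p.support_ne_nil
  have hlast : p.support.getLast hne = a := p.getLast_support
  have h1 : p.support.dropLast ++ [a] = p.support := by
    conv_rhs => rw [← List.dropLast_append_getLast hne]
    rw [hlast]
  have htail : p.support.tail ≠ [] := by
    intro h
    have hlen := congrArg List.length p.support_eq_cons
    rw [h] at hlen
    simp [SimpleGraph.Walk.length_support] at hlen
    exact hp hlen
  have h2 : p.support.dropLast = a :: p.support.tail.dropLast := by
    conv_lhs => rw [p.support_eq_cons]
    rw [List.dropLast_cons_of_ne_nil htail]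
  rw [← pe_support p]
  rw [h2, cyc]
  congr 1
  rw [← h2, h1]

lemma dropLast_support_nodup {G : SimpleGraph V} {a : V} (p : G.Walk a a)
    (hp : p.IsCycle) : p.support.dropLast.Nodup := by
  have hnotnil : ¬ p.Nil := by
    intro h
    have h3 := hp.three_le_length
    rw [SimpleGraph.Walk.nil_iff_length_eq.mp h] at h3
    omega
  have htail : p.support.tail ≠ [] := by
    intro h
    have hlen := congrArg List.length p.support_eq_cons
    rw [h] at hlen
    simp [SimpleGraph.Walk.length_support] at hlen
    exact hnotnil hlen
  have h2 : p.support.dropLast = a :: p.support.tail.dropLast := by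
    conv_lhs => rw [p.support_eq_cons]
    rw [List.dropLast_cons_of_ne_nil htail]
  have hlast : p.support.tail.getLast htail = a := by
    rw [List.getLast_tail]
    exact p.getLast_support
  have hsplit : p.support.tail.dropLast ++ [a] = p.support.tail := by
    conv_rhs => rw [← List.dropLast_append_getLast htail]
    rw [hlast]
  have htnd : p.support.tail.Nodup := hp.support_nodup
  rw [h2, List.nodup_cons]
  constructor
  · intro hmem
    rw [← hsplit, List.nodup_append] at htnd
    exact htnd.2.2 a hmem a (by simp) rfl
  · exact htnd.sublist (List.dropLast_sublist _)

end Graph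

lemma cycle_list_mem {G : SimpleGraph (Fin k)} (hG : ¬ G.IsAcyclic)
    {L : List (Sym2 (Fin k))} (hsub : G.edgeSet ⊆ {q | q ∈ L}) :
    (L.map gen2).prod ∈ arnoldIdeal k := by
  rw [SimpleGraph.IsAcyclic] at hG
  push_neg at hG
  obtain ⟨v, p, hp⟩ := hG
  have hnotnil : ¬ p.Nil := by
    intro h
    have h3 := hp.three_le_length
    rw [SimpleGraph.Walk.nil_iff_length_eq.mp h] at h3
    omega
  have hcyceq : cyc p.support.dropLast = p.edges := cyc_dropLast_support p hnotnil
  have hnd : p.support.dropLast.Nodup := dropLast_support_nodup p hp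
  have hlen : p.support.dropLast.length = p.length := by
    rw [List.length_dropLast, SimpleGraph.Walk.length_support]
    omega
  have hsp : List.Subperm p.edges L := by
    refine List.Nodup.subperm hp.edges_nodup ?_
    intro q hq
    exact hsub (p.edges_subset_edgeSet hq)
  obtain ⟨ε, t, he⟩ := extract hsp
  rw [he]
  refine Submodule.smul_mem _ _ ?_
  have := cyc_mem p.length hp.three_le_length p.support.dropLast hnd hlen 1
    ((t.map gen2).prod)
  rw [hcyceq, one_mul] at this
  exact this

lemma monomial_mem (hk : 1 ≤ k) (l : List (EdgeIdx k)) (hlen : l.length = k - 1) :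
    (l.map gen).prod ∈ Submodule.span ℤ (treeMonomials k) ⊔ arnoldIdeal k := by
  classical
  have hmap : l.map gen = (l.map Subtype.val).map gen2 := by
    erw [List.map_map]
    exact List.map_congr_left fun e _ => (gen2_coe e).symm
  set L := l.map Subtype.val with hL
  set S : Set (Sym2 (Fin k)) := {p | ∃ e ∈ l, e.1 = p} with hS
  set G : SimpleGraph (Fin k) := SimpleGraph.fromEdgeSet S with hG
  have hSL : S = {q | q ∈ L} := by
    ext q
    rw [hS, Set.mem_setOf_eq, Set.mem_setOf_eq, hL]; erw [List.mem_map]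
    rfl
  have hSnd : ∀ q ∈ S, ¬ q.IsDiag := by
    rintro q ⟨e, _, rfl⟩
    exact e.2
  have hedge : G.edgeSet = S := by
    rw [hG, SimpleGraph.edgeSet_fromEdgeSet]
    exact Set.ext fun q => ⟨fun h => h.1, fun h => ⟨h, fun hd => hSnd q h hd⟩⟩
  by_cases htree : G.Connected ∧ G.IsAcyclic
  · apply Submodule.mem_sup_left
    exact Submodule.subset_span ⟨l, hlen, htree.1, htree.2, rfl⟩
  · apply Submodule.mem_sup_right
    rw [hmap]
    by_cases hnd : L.Nodup
    · -- distinct edges; G must fail to be acyclic by the counting argument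
      have hndl : l.Nodup := hnd.of_map
      have hac : ¬ G.IsAcyclic := by
        intro hA
        apply htree
        refine ⟨?_, hA⟩
        haveI : Fintype G.edgeSet := Fintype.ofFinset L.toFinset (by
          intro q
          rw [hedge, hSL]
          simp)
        refine connected_of_acyclic_card hk hA ?_
        have h1 : G.edgeFinset = L.toFinset := by
          apply Finset.ext
          intro q
          rw [SimpleGraph.mem_edgeFinset, hedge, hSL]
          simp
        rw [h1, List.toFinset_card_of_nodup hnd]
        simp [hL, hlen]; exact (List.length_map _).trans hlen
      exact cycle_list_mem hac (by rw [hedge, hSL])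
    · rw [prod_eq_zero_of_not_nodup hnd]
      exact Submodule.zero_mem _

lemma range_ι_eq :
    LinearMap.range (ExteriorAlgebra.ι ℤ : GenModule k →ₗ[ℤ] Lambda k)
      = Submodule.span ℤ (Set.range (gen (k := k))) := by
  rw [LinearMap.range_eq_map,
    ← Module.Basis.span_eq (Finsupp.basisSingleOne (R := ℤ) (ι := EdgeIdx k)),
    Submodule.map_span, ← Set.range_comp]
  have hfun : (⇑(ExteriorAlgebra.ι ℤ : GenModule k →ₗ[ℤ] Lambda k)
      ∘ ⇑(Finsupp.basisSingleOne : Module.Basis (EdgeIdx k) ℤ (GenModule k))) = gen (k := k) := by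
    funext e
    simp only [Function.comp_apply, Finsupp.coe_basisSingleOne, gen]
  rw [hfun]

lemma mem_pow_list {n : ℕ} {x : Lambda k}
    (hx : x ∈ (Set.range (gen (k := k))) ^ n) :
    ∃ l : List (EdgeIdx k), l.length = n ∧ x = (l.map gen).prod := by
  induction n generalizing x with
  | zero =>
      rw [pow_zero, Set.mem_one] at hx
      exact ⟨[], rfl, by simp [hx.symm]⟩
  | succ n ih =>
      rw [pow_succ] at hx
      obtain ⟨y, hy, z, hz, rfl⟩ := Set.mem_mul.mp hx
      obtain ⟨l, hlen, rfl⟩ := ih hy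
      obtain ⟨e, rfl⟩ := hz
      exact ⟨l ++ [e], by simp [hlen], by simp⟩

end Stmt17

theorem stmt_17 (k : ℕ) (hk : 1 ≤ k) :
    ∀ x ∈ degComponent k (k - 1),
      ∃ y ∈ Submodule.span ℤ (treeMonomials k), x - y ∈ arnoldIdeal k := by
  intro x hx
  have hx' : x ∈ Submodule.span ℤ (treeMonomials k) ⊔ arnoldIdeal k := by
    rw [degComponent, Stmt17.range_ι_eq, Submodule.span_pow] at hx
    have hle : Submodule.span ℤ ((Set.range (gen (k := k))) ^ (k - 1))
        ≤ Submodule.span ℤ (treeMonomials k) ⊔ arnoldIdeal k := by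
      rw [Submodule.span_le]
      intro m hm
      obtain ⟨l, hlen, rfl⟩ := Stmt17.mem_pow_list hm
      exact Stmt17.monomial_mem hk l hlen
    exact hle hx
  obtain ⟨y, hy, z, hz, hxyz⟩ := Submodule.mem_sup.mp hx'
  exact ⟨y, hy, by rw [← hxyz]; simpa using hz⟩

end
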